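/- Let 𝒜 be an abelian category with a central charge Z and let ε ∈ (0,1]. (i) For every T ∈ 𝒫([ε,1]) and every F ∈ 𝒫((0,ε)), Hom(T, F) = 0. (ii) If moreover (𝒜, Z) has the Harder–Narasimhan property, then every object E fits into a short exact sequence 0 → E′ → E → E″ → 0 with E′ ∈ 𝒫([ε,1]) and E″ ∈ 𝒫((0,ε)); that is, (𝒫([ε,1]), 𝒫((0,ε))) is a torsion theory on 𝒜. -/

import Mathlib

open CategoryTheory CategoryTheory.Limits

open ZeroObject

universe v u

/-- The phase `φ(z) ∈ (0,1]` of a complex number in `ℍ ∪ ℝ_{≤0}`, defined by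
`z = |z| exp(iπφ(z))` for `z ≠ 0`, and `φ(0) := 1`. -/
noncomputable def phase (z : ℂ) : ℝ := if z = 0 then 1 else z.arg / Real.pi

/-- An object `E` is semistable for the central charge `Z` if `φ(F) ≤ φ(E)`
for every nonzero subobject `F ⊆ E`. -/
def Semistable {C : Type u} [Category.{v} C] [Abelian C] (Z : C → ℂ) (E : C) : Prop :=
  ∀ S : Subobject E, S ≠ ⊥ → phase (Z ((S : C))) ≤ phase (Z E)

/-- `𝒫(I)`: the smallest class of objects containing the zero objects and the semistable
objects of phase in `I`, and closed under extensions. -/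
inductive PhaseClass {C : Type u} [Category.{v} C] [Abelian C] (Z : C → ℂ) (I : Set ℝ) :
    C → Prop
  | zero (E : C) (h : IsZero E) : PhaseClass Z I E
  | of_semistable (E : C) (h0 : ¬IsZero E) (hs : Semistable Z E)
      (hφ : phase (Z E) ∈ I) : PhaseClass Z I E
  | ext (S : ShortComplex C) (hS : S.ShortExact) (h1 : PhaseClass Z I S.X₁)
      (h3 : PhaseClass Z I S.X₃) : PhaseClass Z I S.X₂

/-- The subquotient `S/T` of an object `E` attached to nested subobjects `T ≤ S ≤ E`. -/
noncomputable def subquot {C : Type u} [Category.{v} C] [Abelian C] {E : C}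
    {T S : Subobject E} (h : T ≤ S) : C :=
  cokernel (Subobject.ofLE T S h)

/-- `(𝒜, Z)` has the Harder–Narasimhan property: every nonzero object admits a finite
filtration by subobjects with nonzero semistable subquotients of strictly increasing phase. -/
def HasHNProp {C : Type u} [Category.{v} C] [Abelian C] (Z : C → ℂ) : Prop :=
  ∀ E : C, ¬IsZero E →
    ∃ (p : ℕ) (_ : 0 < p) (c : Fin (p + 1) → Subobject E)
      (hm : ∀ j : Fin p, c j.succ ≤ c j.castSucc),
      c 0 = ⊤ ∧ c (Fin.last p) = ⊥ ∧
      (∀ j : Fin p, ¬IsZero (subquot (hm j)) ∧ Semistable Z (subquot (hm j))) ∧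
      StrictMono fun j : Fin p => phase (Z (subquot (hm j)))

namespace PhaseTorsionAux

/-! ### Elementary facts about phases of complex numbers in `ℍ ∪ ℝ_{<0} ∪ {0}` -/

/-- The region `ℍ ∪ ℝ_{≤0}` where the values of a central charge live. -/
def Region (z : ℂ) : Prop := 0 ≤ z.im ∧ (z.im = 0 → z.re ≤ 0)

lemma Region.arg_mem {z : ℂ} (hz : Region z) (h0 : z ≠ 0) :
    z.arg ∈ Set.Ioc 0 Real.pi := by
  refine ⟨?_, Complex.arg_le_pi z⟩
  rcases (Complex.arg_nonneg_iff.2 hz.1).lt_or_eq with h | h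
  · exact h
  · exfalso
    obtain ⟨hre, him⟩ := Complex.arg_eq_zero_iff.1 h.symm
    exact h0 (Complex.ext (le_antisymm (hz.2 him) hre) him)

lemma Region.phase_mem {z : ℂ} (hz : Region z) : phase z ∈ Set.Ioc 0 1 := by
  by_cases h0 : z = 0
  · simp [phase, h0]
  · obtain ⟨h1, h2⟩ := hz.arg_mem h0
    unfold phase
    rw [if_neg h0]
    exact ⟨div_pos h1 Real.pi_pos, (div_le_one Real.pi_pos).2 h2⟩

/-- The cross product of two complex numbers, `|z||w| sin (arg w - arg z)`. -/
def Dt (z w : ℂ) : ℝ := z.re * w.im - z.im * w.re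

lemma Dt_eq (z w : ℂ) :
    Dt z w = ‖z‖ * ‖w‖ * Real.sin (w.arg - z.arg) := by
  unfold Dt
  rw [Real.sin_sub, ← Complex.norm_mul_cos_arg z, ← Complex.norm_mul_sin_arg z,
    ← Complex.norm_mul_cos_arg w, ← Complex.norm_mul_sin_arg w]
  ring

lemma phase_le_phase_iff {z w : ℂ} (hz : Region z) (hw : Region w)
    (hz0 : z ≠ 0) (hw0 : w ≠ 0) : phase z ≤ phase w ↔ 0 ≤ Dt z w := by
  obtain ⟨hza, hzb⟩ := hz.arg_mem hz0
  obtain ⟨hwa, hwb⟩ := hw.arg_mem hw0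
  have habs : 0 < ‖z‖ * ‖w‖ :=
    mul_pos (norm_pos_iff.mpr hz0) (norm_pos_iff.mpr hw0)
  unfold phase
  rw [if_neg hz0, if_neg hw0, div_le_div_iff_of_pos_right Real.pi_pos]
  constructor
  · intro h
    rw [Dt_eq]
    exact mul_nonneg habs.le
      (Real.sin_nonneg_of_nonneg_of_le_pi (by linarith) (by linarith))
  · intro h
    by_contra hlt
    push_neg at hlt
    have hs : Real.sin (w.arg - z.arg) < 0 :=
      Real.sin_neg_of_neg_of_neg_pi_lt (by linarith) (by linarith)
    rw [Dt_eq] at h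
    nlinarith

lemma region_add {a b : ℂ} (ha : Region a) (hb : Region b) : Region (a + b) := by
  refine ⟨by simpa using add_nonneg ha.1 hb.1, fun h => ?_⟩
  simp only [Complex.add_im] at h
  have h1 : a.im = 0 := le_antisymm (by linarith [hb.1]) ha.1
  have h2 : b.im = 0 := le_antisymm (by linarith [ha.1]) hb.1
  simpa using add_nonpos (ha.2 h1) (hb.2 h2)

/-- The see-saw property of phases: if `φ(a) ≤ φ(a + b)` then `φ(a + b) ≤ φ(b)`. -/
lemma seesaw {a b : ℂ} (ha : Region a) (hb : Region b)
    (h : a = 0 ∨ phase a ≤ phase (a + b)) : phase (a + b) ≤ phase b := by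
  by_cases ha0 : a = 0
  · simp [ha0]
  replace h : phase a ≤ phase (a + b) := h.resolve_left ha0
  by_cases hb0 : b = 0
  · rw [hb0, add_zero]
    simpa [phase] using ha.phase_mem.2
  have hc : Region (a + b) := region_add ha hb
  by_cases hc0 : a + b = 0
  · exfalso
    have him : a.im = 0 := by
      have := congrArg Complex.im hc0
      simp only [Complex.add_im, Complex.zero_im] at this
      linarith [ha.1, hb.1]
    have him' : b.im = 0 := by
      have := congrArg Complex.im hc0
      simp only [Complex.add_im, Complex.zero_im] at this
      linarith [ha.1, hb.1]
    have hre := congrArg Complex.re hc0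
    simp only [Complex.add_re, Complex.zero_re] at hre
    have hre0 : a.re = 0 := le_antisymm (ha.2 him) (by linarith [hb.2 him'])
    exact ha0 (Complex.ext (by simp [hre0]) (by simp [him]))
  have h1 : 0 ≤ Dt a (a + b) := (phase_le_phase_iff ha hc ha0 hc0).1 h
  have h2 : Dt a (a + b) = Dt (a + b) b := by
    simp only [Dt, Complex.add_re, Complex.add_im]
    ring
  exact (phase_le_phase_iff hc hb hc0 hb0).2 (h2 ▸ h1)

/-! ### Categorical helper lemmas -/

variable {C : Type u} [Category.{v} C] [Abelian C]

/-- For any monomorphism `i`, the sequence `0 → X → Y → coker i → 0` is short exact. -/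
lemma sesOfMono {X Y : C} (i : X ⟶ Y) [Mono i] :
    (ShortComplex.mk i (cokernel.π i) (cokernel.condition i)).ShortExact :=
  { exact := ShortComplex.exact_of_g_is_cokernel _ (cokernelIsCokernel i) }

/-- A central charge vanishes on zero objects. -/
lemma z_zero (Z : C → ℂ)
    (hadd : ∀ S : ShortComplex C, S.ShortExact → Z S.X₂ = Z S.X₁ + Z S.X₃)
    {X : C} (hX : IsZero X) : Z X = 0 := by
  have w : 𝟙 X ≫ 𝟙 X = 0 := hX.eq_of_src _ _
  have hS : (ShortComplex.mk (𝟙 X) (𝟙 X) w).ShortExact :=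
    { exact := ShortComplex.exact_of_isZero_X₂ _ hX }
  have := hadd _ hS
  simpa using this.symm

/-- A central charge is invariant under isomorphism. -/
lemma z_iso (Z : C → ℂ)
    (hadd : ∀ S : ShortComplex C, S.ShortExact → Z S.X₂ = Z S.X₁ + Z S.X₃)
    {X Y : C} (e : X ≅ Y) : Z X = Z Y := by
  haveI : Epi (0 : Y ⟶ (0 : C)) :=
    ⟨fun g h _ => (isZero_zero C).eq_of_src g h⟩
  have hS : (ShortComplex.mk e.hom (0 : Y ⟶ (0 : C)) (comp_zero)).ShortExact :=
    { exact := (ShortComplex.exact_iff_epi _ rfl).2 inferInstance }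
  have := hadd _ hS
  rw [z_zero Z hadd (isZero_zero C)] at this
  simpa using this.symm

lemma isZero_of_eq_bot {E : C} (S : Subobject E) (h : S = ⊥) : IsZero (S : C) := by
  rw [h]
  exact (isZero_zero C).of_iso Subobject.botCoeIsoZero

/-- The canonical map `S/T → E/T` for `T ≤ S ≤ E`. -/
noncomputable def quotMap1 {E : C} (T S : Subobject E) (h : T ≤ S) :
    subquot h ⟶ cokernel T.arrow :=
  cokernel.desc _ (S.arrow ≫ cokernel.π T.arrow)
    (by rw [← Category.assoc, Subobject.ofLE_arrow, cokernel.condition])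

/-- The canonical map `E/T → E/S` for `T ≤ S ≤ E`. -/
noncomputable def quotMap2 {E : C} (T S : Subobject E) (h : T ≤ S) :
    cokernel T.arrow ⟶ cokernel S.arrow :=
  cokernel.desc _ (cokernel.π S.arrow)
    (by rw [← Subobject.ofLE_arrow h, Category.assoc, cokernel.condition, comp_zero])

lemma quotMap_w {E : C} (T S : Subobject E) (h : T ≤ S) :
    quotMap1 T S h ≫ quotMap2 T S h = 0 := by
  have : Epi (Y := subquot h) (cokernel.π (Subobject.ofLE T S h)) := coequalizer.π_epi
  rw [← cancel_epi (Y := subquot h) (cokernel.π (Subobject.ofLE T S h))]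
  simp [quotMap1, quotMap2, subquot]
  exact comp_zero.symm

open CategoryTheory.Abelian.Pseudoelement in
/-- The sequence `0 → S/T → E/T → E/S → 0` is short exact, for `T ≤ S ≤ E`. -/
lemma quot_shortExact {E : C} (T S : Subobject E) (h : T ≤ S) :
    (ShortComplex.mk (quotMap1 T S h) (quotMap2 T S h) (quotMap_w T S h)).ShortExact := by
  have hT := (sesOfMono T.arrow).exact
  have hS := (sesOfMono S.arrow).exact
  have hπ1 : cokernel.π (Subobject.ofLE T S h) ≫ quotMap1 T S h
      = S.arrow ≫ cokernel.π T.arrow := cokernel.π_desc _ _ _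
  have hπ2 : cokernel.π T.arrow ≫ quotMap2 T S h = cokernel.π S.arrow :=
    cokernel.π_desc _ _ _
  haveI : Epi (cokernel.π T.arrow ≫ quotMap2 T S h) := by
    rw [hπ2]; infer_instance
  refine { exact := ?_, mono_f := ?_, epi_g := epi_of_epi (cokernel.π T.arrow) _ }
  · apply exact_of_pseudo_exact
    intro b hb
    obtain ⟨e, he⟩ := pseudo_surjective_of_epi (cokernel.π T.arrow) b
    have h1 : pseudoApply (cokernel.π S.arrow) e = 0 := by
      rw [← hπ2, Abelian.Pseudoelement.comp_apply, he]
      exact hb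
    obtain ⟨s, hs⟩ := pseudo_exact_of_exact hS e h1
    refine ⟨pseudoApply (cokernel.π (Subobject.ofLE T S h)) s, ?_⟩
    show pseudoApply (quotMap1 T S h) _ = b
    erw [← Abelian.Pseudoelement.comp_apply, hπ1, Abelian.Pseudoelement.comp_apply]
    rw [show pseudoApply S.arrow s = e from hs, he]
  · apply mono_of_zero_of_map_zero
    intro x hx
    obtain ⟨y, hy⟩ := pseudo_surjective_of_epi (cokernel.π (Subobject.ofLE T S h)) x
    have h1 : pseudoApply (cokernel.π T.arrow) (pseudoApply S.arrow y) = 0 := by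
      erw [← Abelian.Pseudoelement.comp_apply, ← hπ1, Abelian.Pseudoelement.comp_apply, hy]
      exact hx
    obtain ⟨t, ht⟩ := pseudo_exact_of_exact hT (pseudoApply S.arrow y) h1
    have h2 : pseudoApply S.arrow (pseudoApply (Subobject.ofLE T S h) t)
        = pseudoApply S.arrow y := by
      rw [← Abelian.Pseudoelement.comp_apply, Subobject.ofLE_arrow]
      exact ht
    have h3 := pseudo_injective_of_mono S.arrow h2
    rw [← hy, ← h3, ← Abelian.Pseudoelement.comp_apply, cokernel.condition]
    exact zero_apply _ _

/-- If all subquotients `c j / c (j+1)` for `j ≥ n` lie in `𝒫(I)`, then so does `c n`. -/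
lemma tower_sub (Z : C → ℂ) (I : Set ℝ) {E : C} {p : ℕ} (c : Fin (p + 1) → Subobject E)
    (hm : ∀ j : Fin p, c j.succ ≤ c j.castSucc) (hlast : c (Fin.last p) = ⊥) :
    ∀ (d n : ℕ) (h : n + d = p),
      (∀ j : Fin p, n ≤ j.val → PhaseClass Z I (subquot (hm j))) →
      PhaseClass Z I ((c ⟨n, by omega⟩ : C)) := by
  intro d
  induction d with
  | zero =>
    intro n h _
    have hn : (⟨n, by omega⟩ : Fin (p + 1)) = Fin.last p := by
      ext; simp [Fin.last]; omega
    rw [hn, hlast]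
    exact PhaseClass.zero _ (isZero_of_eq_bot _ rfl)
  | succ d ih =>
    intro n h hj
    have hn : n < p := by omega
    have hses := sesOfMono (Subobject.ofLE _ _ (hm ⟨n, hn⟩))
    exact PhaseClass.ext _ hses
      (ih (n + 1) (by omega) (fun j' hj' => hj j' (by omega)))
      (hj ⟨n, hn⟩ (le_refl n))

/-- If all subquotients `c j / c (j+1)` for `j < n` lie in `𝒫(I)`, then so does `E / c n`. -/
lemma tower_quot (Z : C → ℂ) (I : Set ℝ) {E : C} {p : ℕ} (c : Fin (p + 1) → Subobject E)
    (hm : ∀ j : Fin p, c j.succ ≤ c j.castSucc) (h0 : c 0 = ⊤) :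
    ∀ (n : ℕ) (hn : n ≤ p),
      (∀ j : Fin p, j.val < n → PhaseClass Z I (subquot (hm j))) →
      PhaseClass Z I (cokernel ((c ⟨n, by omega⟩).arrow)) := by
  intro n
  induction n with
  | zero =>
    intro _ _
    have h00 : (⟨0, by omega⟩ : Fin (p + 1)) = 0 := by
      ext; simp
    rw [h00, h0]
    exact PhaseClass.zero _ ((isZero_zero C).of_iso (cokernel.ofEpi _))
  | succ n ih =>
    intro hn hj
    have hnp : n < p := by omega
    have hse := quot_shortExact (c (⟨n, hnp⟩ : Fin p).succ) (c (⟨n, hnp⟩ : Fin p).castSucc)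
      (hm ⟨n, hnp⟩)
    exact PhaseClass.ext _ hse
      (hj ⟨n, hnp⟩ (Nat.lt_succ_self n))
      (ih (by omega) (fun j' hj' => hj j' (by omega)))

/-- A nonzero morphism between semistable objects does not decrease phases. -/
lemma phase_le_of_hom (Z : C → ℂ)
    (hadd : ∀ S : ShortComplex C, S.ShortExact → Z S.X₂ = Z S.X₁ + Z S.X₃)
    (him : ∀ E : C, 0 ≤ (Z E).im) (hre : ∀ E : C, (Z E).im = 0 → (Z E).re ≤ 0)
    {T F : C} (hT : Semistable Z T) (hF : Semistable Z F)
    (f : T ⟶ F) (hf : f ≠ 0) : phase (Z T) ≤ phase (Z F) := by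
  set K := kernelSubobject f with hK
  have hses := sesOfMono K.arrow
  have hZT : Z T = Z (K : C) + Z (cokernel K.arrow) := hadd _ hses
  set I : Subobject F := Subobject.mk (image.ι f) with hI
  have e1 : cokernel K.arrow ≅ cokernel (kernel.ι f) :=
    cokernelIsoOfEq (kernelSubobject_arrow f).symm ≪≫
      cokernelEpiComp (kernelSubobjectIso f).hom (kernel.ι f)
  have e2 : cokernel (kernel.ι f) ≅ image f := Abelian.coimageIsoImage' f
  have e3 : image f ≅ (I : C) := (Subobject.underlyingIso (image.ι f)).symm
  have hZI : Z (cokernel K.arrow) = Z ((I : C)) :=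
    z_iso Z hadd (e1 ≪≫ e2 ≪≫ e3)
  have hI0 : I ≠ ⊥ := by
    rw [hI]
    rw [Ne, Subobject.mk_eq_bot_iff_zero]
    intro h
    apply hf
    rw [← image.fac f, h, comp_zero]
  have h2 : phase (Z (I : C)) ≤ phase (Z F) := hF I hI0
  have h1 : phase (Z T) ≤ phase (Z (cokernel K.arrow)) := by
    have hor : Z (K : C) = 0 ∨
        phase (Z (K : C)) ≤ phase (Z (K : C) + Z (cokernel K.arrow)) := by
      by_cases hKb : K = ⊥
      · exact Or.inl (z_zero Z hadd (isZero_of_eq_bot _ hKb))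
      · right
        rw [← hZT]
        exact hT K hKb
    have := seesaw ⟨him (K : C), hre _⟩ ⟨him _, hre _⟩ hor
    rwa [← hZT] at this
  calc phase (Z T) ≤ phase (Z (cokernel K.arrow)) := h1
    _ = phase (Z ((I : C))) := by rw [hZI]
    _ ≤ phase (Z F) := h2

/-- Part (i): `𝒫([ε,1])` is left orthogonal to `𝒫((0,ε))`. -/
lemma part_i (Z : C → ℂ)
    (hadd : ∀ S : ShortComplex C, S.ShortExact → Z S.X₂ = Z S.X₁ + Z S.X₃)
    (him : ∀ E : C, 0 ≤ (Z E).im) (hre : ∀ E : C, (Z E).im = 0 → (Z E).re ≤ 0)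
    {ε : ℝ} :
    ∀ T F : C, PhaseClass Z (Set.Icc ε 1) T → PhaseClass Z (Set.Ioo 0 ε) F →
      ∀ f : T ⟶ F, f = 0 := by
  intro T F hT hF
  induction hT with
  | zero T h => exact fun f => h.eq_of_src f 0
  | ext S hS h1 h3 ih1 ih3 =>
    intro f
    obtain ⟨d, hd⟩ := CokernelCofork.IsColimit.desc' hS.gIsCokernel f (ih1 (S.f ≫ f))
    rw [← hd, ih3 d, comp_zero]
  | of_semistable T h0T hsT hφT =>
    induction hF with
    | zero F h => exact fun f => h.eq_of_tgt f 0
    | of_semistable F h0F hsF hφF =>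
      intro f
      by_contra hf
      have hle := phase_le_of_hom Z hadd him hre hsT hsF f hf
      have h1 : ε ≤ phase (Z F) := le_trans hφT.1 hle
      exact absurd h1 (not_le.2 hφF.2)
    | ext S hS h1 h3 ih1 ih3 =>
      intro f
      obtain ⟨l, hl⟩ := KernelFork.IsLimit.lift' hS.fIsKernel f (ih3 (f ≫ S.g))
      rw [← hl, ih1 l, zero_comp]

end PhaseTorsionAux

open PhaseTorsionAux

/-- (i) `𝒫([ε,1])` is left orthogonal to `𝒫((0,ε))`; (ii) if `(𝒜, Z)` has the
Harder–Narasimhan property, every object `E` fits in a short exact sequence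
`0 → E′ → E → E″ → 0` with `E′ ∈ 𝒫([ε,1])` and `E″ ∈ 𝒫((0,ε))`, i.e.
`(𝒫([ε,1]), 𝒫((0,ε)))` is a torsion theory. -/
theorem phase_torsion_theory
    {C : Type u} [Category.{v} C] [Abelian C] (Z : C → ℂ)
    (hadd : ∀ S : ShortComplex C, S.ShortExact → Z S.X₂ = Z S.X₁ + Z S.X₃)
    (him : ∀ E : C, 0 ≤ (Z E).im)
    (hre : ∀ E : C, (Z E).im = 0 → (Z E).re ≤ 0)
    (ε : ℝ) (hε : ε ∈ Set.Ioc (0 : ℝ) 1) :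
    (∀ T F : C, PhaseClass Z (Set.Icc ε 1) T → PhaseClass Z (Set.Ioo 0 ε) F →
      ∀ f : T ⟶ F, f = 0) ∧
    (HasHNProp Z → ∀ E : C,
      ∃ (E' E'' : C) (f : E' ⟶ E) (g : E ⟶ E'') (w : f ≫ g = 0),
        (ShortComplex.mk f g w).ShortExact ∧
        PhaseClass Z (Set.Icc ε 1) E' ∧ PhaseClass Z (Set.Ioo 0 ε) E'') := by
  constructor
  · exact part_i Z hadd him hre
  · intro hHN E
    by_cases hE : IsZero E
    · refine ⟨E, E, 𝟙 E, 𝟙 E, hE.eq_of_src _ _,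
        { exact := ShortComplex.exact_of_isZero_X₂ _ hE },
        PhaseClass.zero _ hE, PhaseClass.zero _ hE⟩
    · obtain ⟨p, hp, c, hm, hc0, hclast, hsq, hmono⟩ := hHN E hE
      set φ : Fin p → ℝ := fun j => phase (Z (subquot (hm j))) with hφ
      obtain ⟨k, hk, hge, hlt⟩ : ∃ k : ℕ, k ≤ p ∧ (∀ j : Fin p, k ≤ j.val → ε ≤ φ j) ∧
          (∀ j : Fin p, j.val < k → φ j < ε) := by
        set s := Finset.univ.filter (fun j : Fin p => ε ≤ φ j) with hs
        by_cases hne : s.Nonempty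
        · refine ⟨(s.min' hne).val, le_of_lt (s.min' hne).isLt, ?_, ?_⟩
          · intro j hj
            have h1 : ε ≤ φ (s.min' hne) := (Finset.mem_filter.1 (s.min'_mem hne)).2
            have h2 : s.min' hne ≤ j := by
              rw [Fin.le_def]; exact hj
            exact le_trans h1 (hmono.monotone h2)
          · intro j hj
            by_contra hc'
            push_neg at hc'
            have hmem : j ∈ s := Finset.mem_filter.2 ⟨Finset.mem_univ _, hc'⟩
            have := s.min'_le j hmem
            rw [Fin.le_def] at this
            omega
        · refine ⟨p, le_refl p, fun j hj => absurd j.isLt (by omega), fun j _ => ?_⟩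
          by_contra hc'
          push_neg at hc'
          exact hne ⟨j, Finset.mem_filter.2 ⟨Finset.mem_univ _, hc'⟩⟩
      refine ⟨((c ⟨k, Nat.lt_succ_of_le hk⟩ : Subobject E) : C), cokernel ((c ⟨k, Nat.lt_succ_of_le hk⟩).arrow),
        (c ⟨k, Nat.lt_succ_of_le hk⟩).arrow, cokernel.π _, cokernel.condition _, sesOfMono _, ?_, ?_⟩
      · exact tower_sub Z _ c hm hclast (p - k) k (by omega) (fun j hj =>
          PhaseClass.of_semistable _ (hsq j).1 (hsq j).2
            ⟨hge j hj, (Region.phase_mem ⟨him _, hre _⟩).2⟩)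
      · exact tower_quot Z _ c hm hc0 k (by omega) (fun j hj =>
          PhaseClass.of_semistable _ (hsq j).1 (hsq j).2
            ⟨(Region.phase_mem ⟨him _, hre _⟩).1, hlt j hj⟩)
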